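/- Let C be a planar convex body that is k_C-rotationally symmetric about a point p in its interior, where k_C is a composite integer whose smallest divisor χ greater than 1 satisfies χ ≥ 3, and let q = k_C / χ be the largest divisor of k_C smaller than k_C. Then the minimum of the values d_M(P_k) over the divisors k > 1 of k_C is attained uniquely by d_M(P_{k_C}) — equivalently, d_M(P_q) > d_M(P_{k_C}) — if and only if d_M(P_q) ≠ R. -/

import Mathlib

open Metric Set

/-- Rotation of angle `α` about the point `p` in the plane `ℂ`. -/
noncomputable def rot (p : ℂ) (α : ℝ) : ℂ → ℂ :=
  fun z => p + Complex.exp (α * Complex.I) * (z - p)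

/-- A planar convex body: a compact convex subset of the plane with nonempty interior. -/
def IsConvexBody (C : Set ℂ) : Prop :=
  IsCompact C ∧ Convex ℝ C ∧ (interior C).Nonempty

/-- `C` is `k`-rotationally symmetric about `p`: the rotation of angle `2π/k`
about `p` maps `C` onto itself. -/
def IsRotSym (C : Set ℂ) (p : ℂ) (k : ℕ) : Prop :=
  rot p (2 * Real.pi / k) '' C = C

/-- The closed convex sector at `p` spanned by `x - p` and `ρ_k(x) - p`. -/
noncomputable def sector (p x : ℂ) (k : ℕ) : Set ℂ :=
  {z | ∃ a b : ℝ, 0 ≤ a ∧ 0 ≤ b ∧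
    z = p + (a : ℂ) * (x - p) + (b : ℂ) * (rot p (2 * Real.pi / k) x - p)}

/-- The maximum relative diameter of the standard `k`-partition of `C`
(with center `p` and endpoint `x`): the diameter of one piece `C ∩ S_k`. -/
noncomputable def dM (C : Set ℂ) (p x : ℂ) (k : ℕ) : ℝ :=
  Metric.diam (C ∩ sector p x k)

/-- The circumradius of `C` with respect to `p`: `sup_{y ∈ C} dist p y`. -/
noncomputable def circumrad (C : Set ℂ) (p : ℂ) : ℝ :=
  ⨆ y ∈ C, dist p y

lemma angle_pos {k : ℕ} (hk : 3 ≤ k) : 0 < 2 * Real.pi / k :=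
  div_pos (by positivity) (by exact_mod_cast Nat.lt_of_lt_of_le (by norm_num) hk)

lemma angle_le {k : ℕ} (hk : 3 ≤ k) : 2 * Real.pi / k ≤ 2 * Real.pi / 3 := by
  apply div_le_div_of_nonneg_left (by positivity) (by norm_num)
  exact_mod_cast hk

lemma angle_lt_pi {k : ℕ} (hk : 3 ≤ k) : 2 * Real.pi / k < Real.pi := by
  have := angle_le hk
  nlinarith [Real.pi_pos]

lemma mul_exp_im (w : ℂ) (t : ℝ) :
    (w * Complex.exp ((t : ℂ) * Complex.I)).im = w.re * Real.sin t + w.im * Real.cos t := by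
  simp [Complex.mul_im, Complex.exp_ofReal_mul_I_re, Complex.exp_ofReal_mul_I_im]

lemma mem_sector {p x : ℂ} {k : ℕ} (hk : 3 ≤ k) (w : ℂ)
    (h1 : 0 ≤ w.im)
    (h2 : (w * Complex.exp (((-(2 * Real.pi / k) : ℝ) : ℂ) * Complex.I)).im ≤ 0) :
    p + w * (x - p) ∈ sector p x k := by
  set α : ℝ := 2 * Real.pi / k with hα
  have hs : 0 < Real.sin α := Real.sin_pos_of_pos_of_lt_pi (angle_pos hk) (angle_lt_pi hk)
  rw [mul_exp_im, Real.sin_neg, Real.cos_neg] at h2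
  refine ⟨(w.re * Real.sin α - w.im * Real.cos α) / Real.sin α, w.im / Real.sin α,
    div_nonneg (by nlinarith) hs.le, div_nonneg h1 hs.le, ?_⟩
  have hw : (((w.re * Real.sin α - w.im * Real.cos α) / Real.sin α : ℝ) : ℂ)
      + ((w.im / Real.sin α : ℝ) : ℂ) * Complex.exp ((α : ℂ) * Complex.I) = w := by
    apply Complex.ext
    · simp only [Complex.add_re, Complex.ofReal_re, Complex.mul_re, Complex.ofReal_im,
        Complex.exp_ofReal_mul_I_re, Complex.exp_ofReal_mul_I_im]
      field_simp
      ring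
    · simp only [Complex.add_im, Complex.ofReal_im, Complex.mul_im, Complex.ofReal_re,
        Complex.exp_ofReal_mul_I_re, Complex.exp_ofReal_mul_I_im]
      field_simp
      ring
  have hrot : Complex.exp ((α : ℂ) * Complex.I) * (x - p) = rot p α x - p := by
    simp only [rot]; ring
  calc p + w * (x - p)
      = p + (((w.re * Real.sin α - w.im * Real.cos α) / Real.sin α : ℝ)
          + ((w.im / Real.sin α : ℝ) : ℂ) * Complex.exp ((α : ℂ) * Complex.I)) * (x - p) := by
        rw [hw]
    _ = p + ((w.re * Real.sin α - w.im * Real.cos α) / Real.sin α : ℝ) * (x - p)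
          + ((w.im / Real.sin α : ℝ) : ℂ) * (Complex.exp ((α : ℂ) * Complex.I) * (x - p)) := by
        ring
    _ = _ := by rw [hrot]

lemma angle_anti {k k' : ℕ} (hk : 3 ≤ k) (hkk' : k ≤ k') : 2 * Real.pi / k' ≤ 2 * Real.pi / k := by
  apply div_le_div_of_nonneg_left (by positivity)
    (by exact_mod_cast Nat.lt_of_lt_of_le (by norm_num) hk)
  exact_mod_cast hkk'

lemma self_mem_sector (p x : ℂ) (k : ℕ) : p ∈ sector p x k :=
  ⟨0, 0, le_rfl, le_rfl, by simp⟩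

lemma sector_anti (p x : ℂ) {k k' : ℕ} (hk : 3 ≤ k) (hkk' : k ≤ k') :
    sector p x k' ⊆ sector p x k := by
  rintro z ⟨a, b, ha, hb, rfl⟩
  have hk' : 3 ≤ k' := hk.trans hkk'
  set α : ℝ := 2 * Real.pi / k with hαdef
  set α' : ℝ := 2 * Real.pi / k' with hα'def
  have hsα : 0 < Real.sin α := Real.sin_pos_of_pos_of_lt_pi (angle_pos hk) (angle_lt_pi hk)
  have hsα' : 0 ≤ Real.sin α' :=
    Real.sin_nonneg_of_nonneg_of_le_pi (angle_pos hk').le (angle_lt_pi hk').le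
  set w : ℂ := (a : ℂ) + (b : ℂ) * Complex.exp ((α' : ℂ) * Complex.I) with hwdef
  have hre : w.re = a + b * Real.cos α' := by
    simp [hwdef, Complex.add_re, Complex.mul_re, Complex.exp_ofReal_mul_I_re,
      Complex.exp_ofReal_mul_I_im]
  have him : w.im = b * Real.sin α' := by
    simp [hwdef, Complex.add_im, Complex.mul_im, Complex.exp_ofReal_mul_I_re,
      Complex.exp_ofReal_mul_I_im]
  have h1 : 0 ≤ w.im := by rw [him]; exact mul_nonneg hb hsα'
  have h2 : (w * Complex.exp (((-α : ℝ) : ℂ) * Complex.I)).im ≤ 0 := by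
    rw [mul_exp_im, Real.sin_neg, Real.cos_neg, hre, him]
    have hss : Real.sin (α' - α) ≤ 0 := by
      apply Real.sin_nonpos_of_nonpos_of_neg_pi_le
      · have := angle_anti hk hkk'; linarith
      · have h1 := angle_pos hk'
        have h2 := angle_lt_pi hk
        linarith
    have key : (a + b * Real.cos α') * (-Real.sin α) + b * Real.sin α' * Real.cos α
        = -(a * Real.sin α) + b * Real.sin (α' - α) := by rw [Real.sin_sub]; ring
    have h3 : b * Real.sin (α' - α) ≤ 0 := mul_nonpos_of_nonneg_of_nonpos hb hss
    have h4 : 0 ≤ a * Real.sin α := mul_nonneg ha hsα.le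
    nlinarith
  have hz : p + (a : ℂ) * (x - p) + (b : ℂ) * (rot p α' x - p) = p + w * (x - p) := by
    simp only [rot, hwdef]; ring
  rw [hz]
  exact mem_sector hk w h1 h2

lemma rot_rot (p : ℂ) (a b : ℝ) (z : ℂ) : rot p a (rot p b z) = rot p (a + b) z := by
  simp only [rot]
  rw [show (((a + b : ℝ)) : ℂ) * Complex.I = (a : ℂ) * Complex.I + (b : ℂ) * Complex.I by
    push_cast; ring, Complex.exp_add]
  ring

lemma rotsym_iterate {C : Set ℂ} {p : ℂ} {β : ℝ} (hsym : rot p β '' C = C) :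
    ∀ n : ℕ, rot p (n * β) '' C = C := by
  intro n
  induction n with
  | zero =>
      have h0 : rot p ((0 : ℕ) * β) = id := by
        funext z; simp [rot]
      rw [h0, Set.image_id]
  | succ n ih =>
      have h1 : rot p (((n + 1 : ℕ) : ℝ) * β) '' C
          = rot p ((n : ℕ) * β) '' (rot p β '' C) := by
        rw [Set.image_image]
        apply Set.image_congr'
        intro z
        rw [rot_rot]
        norm_num
        ring_nf
      rw [h1, hsym, ih]

lemma circumrad_le_dM (C : Set ℂ) (p x : ℂ) {k : ℕ} (hk : 3 ≤ k) (hxp : x ≠ p)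
    (hsymj : ∀ j : ℕ, rot p (j * (2 * Real.pi / k)) '' C = C)
    (hpC : p ∈ C) (hb : Bornology.IsBounded C)
    {y : ℂ} (hy : y ∈ C) (hyR : circumrad C p = dist p y) :
    circumrad C p ≤ dM C p x k := by
  set α : ℝ := 2 * Real.pi / k with hαdef
  have hα0 : 0 < α := angle_pos hk
  have hαπ : α < Real.pi := angle_lt_pi hk
  have hxp' : x - p ≠ 0 := sub_ne_zero.2 hxp
  set w : ℂ := (y - p) / (x - p) with hwdef
  have hwy : w * (x - p) = y - p := div_mul_cancel₀ _ hxp'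
  by_cases hyp : y = p
  · rw [hyR, hyp, dist_self]; exact Metric.diam_nonneg
  set θ : ℝ := Complex.arg w with hθdef
  set m : ℤ := ⌊θ / α⌋ with hmdef
  set t : ℤ := (-m) / k with htdef
  set j : ℕ := ((-m) % (k : ℤ)).toNat with hjdef
  have hkz : (k : ℤ) ≠ 0 := by positivity
  have hjnn : 0 ≤ (-m) % (k : ℤ) := Int.emod_nonneg _ hkz
  have hj : (j : ℤ) = -m - k * t := by
    rw [hjdef, Int.toNat_of_nonneg hjnn, Int.emod_def, htdef]
  have hkα : (k : ℝ) * α = 2 * Real.pi := by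
    rw [hαdef]; field_simp
  have hreal : (j : ℝ) * α = (-(m : ℝ)) * α + ((-t : ℤ) : ℝ) * (2 * Real.pi) := by
    have hcast : (j : ℝ) = -(m : ℝ) - (k : ℝ) * (t : ℝ) := by exact_mod_cast hj
    rw [hcast]
    push_cast
    linear_combination (-(t : ℝ)) * hkα
  have hexp : Complex.exp ((((j : ℝ) * α : ℝ) : ℂ) * Complex.I)
      = Complex.exp (((-(m : ℝ) * α : ℝ) : ℂ) * Complex.I) := by
    rw [hreal]
    have : (((-(m : ℝ)) * α + ((-t : ℤ) : ℝ) * (2 * Real.pi) : ℝ) : ℂ) * Complex.I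
        = ((-(m : ℝ) * α : ℝ) : ℂ) * Complex.I
          + ((-t : ℤ) : ℂ) * (2 * (Real.pi : ℂ) * Complex.I) := by
      push_cast; ring
    rw [this, Complex.exp_add, Complex.exp_int_mul_two_pi_mul_I, mul_one]
  set φ : ℝ := θ - m * α with hφdef
  have hφ0 : 0 ≤ φ := by
    have h1 : (m : ℝ) ≤ θ / α := Int.floor_le _
    have := (le_div_iff₀ hα0).1 h1
    rw [hφdef]; linarith
  have hφα : φ < α := by
    have h1 : θ / α < m + 1 := Int.lt_floor_add_one _
    have := (div_lt_iff₀ hα0).1 h1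
    rw [hφdef]; nlinarith
  set r : ℝ := ‖w‖ with hrdef
  set w' : ℂ := (r : ℂ) * Complex.exp ((φ : ℂ) * Complex.I) with hw'def
  have hw' : Complex.exp ((((j : ℝ) * α : ℝ) : ℂ) * Complex.I) * w = w' := by
    rw [hexp, ← Complex.norm_mul_exp_arg_mul_I w, ← hrdef, ← hθdef, mul_left_comm,
      ← Complex.exp_add, hw'def]
    congr 1
    rw [hφdef]
    push_cast
    ring
  set z : ℂ := rot p ((j : ℝ) * α) y with hzdef
  have hzC : z ∈ C := by
    rw [hzdef, ← hsymj j]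
    exact ⟨y, hy, rfl⟩
  have hzform : z = p + w' * (x - p) := by
    rw [hzdef]
    simp only [rot]
    rw [← hwy, ← mul_assoc, hw']
  have hsφ : 0 ≤ Real.sin φ :=
    Real.sin_nonneg_of_nonneg_of_le_pi hφ0 (by linarith)
  have hr0 : 0 ≤ r := norm_nonneg w
  have hzsec : z ∈ sector p x k := by
    rw [hzform]
    apply mem_sector hk w'
    · rw [hw'def, mul_exp_im]
      simp only [Complex.ofReal_re, Complex.ofReal_im]
      nlinarith
    · have hcomb : w' * Complex.exp (((-α : ℝ) : ℂ) * Complex.I)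
          = (r : ℂ) * Complex.exp (((φ - α : ℝ) : ℂ) * Complex.I) := by
        rw [hw'def, mul_assoc, ← Complex.exp_add]
        congr 2
        push_cast
        ring
      rw [hαdef] at hcomb
      rw [hcomb, mul_exp_im]
      simp only [Complex.ofReal_re, Complex.ofReal_im]
      have hsφα : Real.sin (φ - (2 * Real.pi / k)) ≤ 0 := by
        apply Real.sin_nonpos_of_nonpos_of_neg_pi_le <;> rw [← hαdef] <;> linarith
      nlinarith
  have hdisty : dist p y = r * ‖x - p‖ := by
    rw [dist_comm, Complex.dist_eq, ← hwy, norm_mul, hrdef]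
  have hdistz : dist p z = r * ‖x - p‖ := by
    rw [dist_comm, Complex.dist_eq, hzform, add_sub_cancel_left, norm_mul, hw'def, norm_mul]
    rw [Complex.norm_exp_ofReal_mul_I]
    simp [abs_of_nonneg hr0]
  rw [hyR, hdisty, ← hdistz, dist_comm]
  exact Metric.dist_le_diam_of_mem (hb.subset Set.inter_subset_left)
    ⟨hzC, hzsec⟩ ⟨hpC, self_mem_sector p x k⟩

lemma key_ineq (a b a' b' c : ℝ) (ha : 0 ≤ a) (hb : 0 ≤ b) (ha' : 0 ≤ a') (hb' : 0 ≤ b')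
    (hc : 1/2 ≤ c) :
    (a^2 + b^2 + 2*a*b*c) * (a'^2 + b'^2 + 2*a'*b'*c)
      ≤ 4 * (a*a' + b*b' + (a*b' + a'*b)*c)^2 := by
  have hc0 : (0:ℝ) ≤ c := by linarith
  have hid : (a^2 + b^2 + 2*a*b*c) * (a'^2 + b'^2 + 2*a'*b'*c)
      = (a*a' + b*b' + (a*b' + a'*b)*c)^2 + (a'*b - a*b')^2 * (1 - c^2) := by ring
  have hE0 : 0 ≤ (a'*b - a*b')^2 := sq_nonneg _
  have habs : (a'*b - a*b')^2 ≤ (a*b' + a'*b)^2 := by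
    nlinarith [mul_nonneg (mul_nonneg ha hb') (mul_nonneg ha' hb)]
  have hsq : (a'*b - a*b')^2 * c^2 ≤ (a*a' + b*b' + (a*b' + a'*b)*c)^2 := by
    have h1 : 0 ≤ c * (a*b'+a'*b) := by nlinarith [mul_nonneg ha hb', mul_nonneg ha' hb]
    have h2 : 0 ≤ a*a' + b*b' := by nlinarith [mul_nonneg ha ha', mul_nonneg hb hb']
    nlinarith [sq_nonneg c, mul_nonneg (mul_nonneg hc0 hc0) (sub_nonneg.2 habs),
      mul_nonneg h2 h1, sq_nonneg (a*a'+b*b')]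
  have h4c : 0 ≤ 4*c^2 - 1 := by nlinarith
  have h3 : (a'*b - a*b')^2 * (1 - c^2) ≤ 3 * ((a'*b - a*b')^2 * c^2) := by
    nlinarith [mul_nonneg hE0 h4c]
  linarith [hid, hsq, h3]

lemma normSq_add_mul_exp (u v t : ℝ) :
    Complex.normSq ((u:ℂ) + (v:ℂ) * Complex.exp ((t:ℂ) * Complex.I))
      = u^2 + v^2 + 2*u*v*Real.cos t := by
  rw [Complex.normSq_apply]
  simp only [Complex.add_re, Complex.add_im, Complex.mul_re, Complex.mul_im,
    Complex.ofReal_re, Complex.ofReal_im, Complex.exp_ofReal_mul_I_re,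
    Complex.exp_ofReal_mul_I_im]
  have h := Real.sin_sq_add_cos_sq t
  nlinarith [h]

set_option maxHeartbeats 1000000 in
lemma dM_le_circumrad (C : Set ℂ) (p x : ℂ) {k : ℕ} (hk6 : 6 ≤ k)
    (hbdd : ∀ y ∈ C, dist p y ≤ circumrad C p) (hR0 : 0 ≤ circumrad C p) :
    dM C p x k ≤ circumrad C p := by
  set R : ℝ := circumrad C p with hRdef
  have hk : 3 ≤ k := by omega
  have hα0 : 0 ≤ 2 * Real.pi / k := (angle_pos hk).le
  have hα3 : 2 * Real.pi / k ≤ Real.pi / 3 := by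
    have : 2 * Real.pi / k ≤ 2 * Real.pi / 6 := by
      apply div_le_div_of_nonneg_left (by positivity) (by norm_num)
      exact_mod_cast hk6
    linarith
  have hc : 1/2 ≤ Real.cos (2 * Real.pi / k) := by
    have h1 : Real.cos (Real.pi / 3) ≤ Real.cos (2 * Real.pi / k) :=
      Real.cos_le_cos_of_nonneg_of_le_pi hα0 (by linarith [Real.pi_pos]) hα3
    rw [Real.cos_pi_div_three] at h1
    exact h1
  have hc0 : (0:ℝ) ≤ Real.cos (2 * Real.pi / k) := by linarith
  set c : ℝ := Real.cos (2 * Real.pi / k)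
  set D : ℝ := Complex.normSq (x - p) with hDdef
  have hD0 : 0 ≤ D := Complex.normSq_nonneg _
  apply Metric.diam_le_of_forall_dist_le hR0
  rintro y ⟨hyC, a, b, ha, hb, rfl⟩ z ⟨hzC, a', b', ha', hb', rfl⟩
  have hdiff : (p + (a:ℂ) * (x - p) + (b:ℂ) * (rot p (2 * Real.pi / k) x - p))
      - (p + (a':ℂ) * (x - p) + (b':ℂ) * (rot p (2 * Real.pi / k) x - p))
      = (((a - a' : ℝ):ℂ) + ((b - b' : ℝ):ℂ)
          * Complex.exp (((2 * Real.pi / k : ℝ):ℂ) * Complex.I)) * (x - p) := by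
    simp only [rot]; push_cast; ring
  have hpy : p - (p + (a:ℂ) * (x - p) + (b:ℂ) * (rot p (2 * Real.pi / k) x - p))
      = -(((a : ℂ) + (b : ℂ)
          * Complex.exp (((2 * Real.pi / k : ℝ):ℂ) * Complex.I)) * (x - p)) := by
    simp only [rot]; push_cast; ring
  have hpz : p - (p + (a':ℂ) * (x - p) + (b':ℂ) * (rot p (2 * Real.pi / k) x - p))
      = -(((a' : ℂ) + (b' : ℂ)
          * Complex.exp (((2 * Real.pi / k : ℝ):ℂ) * Complex.I)) * (x - p)) := by
    simp only [rot]; push_cast; ring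
  have hQy : dist p (p + (a:ℂ) * (x - p) + (b:ℂ) * (rot p (2 * Real.pi / k) x - p)) ^ 2
      = (a^2 + b^2 + 2*a*b*c) * D := by
    rw [Complex.dist_eq, Complex.sq_norm, hpy, Complex.normSq_neg, map_mul,
      normSq_add_mul_exp, hDdef]
  have hQz : dist p (p + (a':ℂ) * (x - p) + (b':ℂ) * (rot p (2 * Real.pi / k) x - p)) ^ 2
      = (a'^2 + b'^2 + 2*a'*b'*c) * D := by
    rw [Complex.dist_eq, Complex.sq_norm, hpz, Complex.normSq_neg, map_mul,
      normSq_add_mul_exp, hDdef]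
  have hyz : dist (p + (a:ℂ) * (x - p) + (b:ℂ) * (rot p (2 * Real.pi / k) x - p))
      (p + (a':ℂ) * (x - p) + (b':ℂ) * (rot p (2 * Real.pi / k) x - p)) ^ 2
      = ((a-a')^2 + (b-b')^2 + 2*(a-a')*(b-b')*c) * D := by
    rw [Complex.dist_eq, Complex.sq_norm, hdiff, map_mul, normSq_add_mul_exp, hDdef]
  have hQyR : (a^2 + b^2 + 2*a*b*c) * D ≤ R^2 := by
    rw [← hQy]; exact pow_le_pow_left₀ dist_nonneg (hbdd _ hyC) 2
  have hQzR : (a'^2 + b'^2 + 2*a'*b'*c) * D ≤ R^2 := by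
    rw [← hQz]; exact pow_le_pow_left₀ dist_nonneg (hbdd _ hzC) 2
  have hkey := key_ineq a b a' b' c ha hb ha' hb' hc
  have hP0 : 0 ≤ a*a' + b*b' + (a*b' + a'*b)*c := by
    have h1 : 0 ≤ (a*b'+a'*b)*c := by
      apply mul_nonneg _ hc0
      nlinarith [mul_nonneg ha hb', mul_nonneg ha' hb]
    nlinarith [mul_nonneg ha ha', mul_nonneg hb hb']
  have hQ0 : 0 ≤ a^2 + b^2 + 2*a*b*c := by nlinarith [mul_nonneg (mul_nonneg ha hb) hc0]
  have hQ'0 : 0 ≤ a'^2 + b'^2 + 2*a'*b'*c := by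
    nlinarith [mul_nonneg (mul_nonneg ha' hb') hc0]
  have hQd : (a-a')^2 + (b-b')^2 + 2*(a-a')*(b-b')*c
      = (a^2 + b^2 + 2*a*b*c) + (a'^2 + b'^2 + 2*a'*b'*c)
        - 2 * (a*a' + b*b' + (a*b' + a'*b)*c) := by ring
  have hsq : dist (p + (a:ℂ) * (x - p) + (b:ℂ) * (rot p (2 * Real.pi / k) x - p))
      (p + (a':ℂ) * (x - p) + (b':ℂ) * (rot p (2 * Real.pi / k) x - p)) ^ 2 ≤ R^2 := by
    rw [hyz]
    rcases le_total (a^2 + b^2 + 2*a*b*c) (a'^2 + b'^2 + 2*a'*b'*c) with h | h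
    · have hQsq : (a^2 + b^2 + 2*a*b*c)^2 ≤ (2 * (a*a' + b*b' + (a*b' + a'*b)*c))^2 := by
        nlinarith [mul_le_mul_of_nonneg_left h hQ0]
      have h2P : a^2 + b^2 + 2*a*b*c ≤ 2 * (a*a' + b*b' + (a*b' + a'*b)*c) :=
        (pow_le_pow_iff_left₀ hQ0 (by linarith) (by norm_num)).1 hQsq
      have hle : (a-a')^2 + (b-b')^2 + 2*(a-a')*(b-b')*c
          ≤ a'^2 + b'^2 + 2*a'*b'*c := by rw [hQd]; linarith
      calc ((a-a')^2 + (b-b')^2 + 2*(a-a')*(b-b')*c) * D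
          ≤ (a'^2 + b'^2 + 2*a'*b'*c) * D := mul_le_mul_of_nonneg_right hle hD0
        _ ≤ R^2 := hQzR
    · have hQsq : (a'^2 + b'^2 + 2*a'*b'*c)^2 ≤ (2 * (a*a' + b*b' + (a*b' + a'*b)*c))^2 := by
        nlinarith [mul_le_mul_of_nonneg_left h hQ'0]
      have h2P : a'^2 + b'^2 + 2*a'*b'*c ≤ 2 * (a*a' + b*b' + (a*b' + a'*b)*c) :=
        (pow_le_pow_iff_left₀ hQ'0 (by linarith) (by norm_num)).1 hQsq
      have hle : (a-a')^2 + (b-b')^2 + 2*(a-a')*(b-b')*c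
          ≤ a^2 + b^2 + 2*a*b*c := by rw [hQd]; linarith
      calc ((a-a')^2 + (b-b')^2 + 2*(a-a')*(b-b')*c) * D
          ≤ (a^2 + b^2 + 2*a*b*c) * D := mul_le_mul_of_nonneg_right hle hD0
        _ ≤ R^2 := hQyR
  exact (pow_le_pow_iff_left₀ dist_nonneg hR0 (by norm_num)).1 hsq

/-- For a multi-rotationally symmetric planar convex body with composite
maximal degree `k_C` and minimal degree `minFac k_C ≥ 3`, letting
`q = k_C / minFac k_C` be the largest divisor of `k_C` smaller than `k_C`,
the minimum of the values `d_M(P_k)` over divisors `k > 1` of `k_C` is attained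
uniquely by `d_M(P_{k_C})` — equivalently `d_M(P_q) > d_M(P_{k_C})` —
iff `d_M(P_q) ≠ R`. -/
theorem stmt_14 (C : Set ℂ) (p x : ℂ) (kC : ℕ) (hC : IsConvexBody C)
    (hk2 : 2 ≤ kC) (hcomp : ¬ kC.Prime) (hmin : 3 ≤ kC.minFac)
    (hsym : IsRotSym C p kC) (hp : p ∈ interior C)
    (hx : x ∈ frontier C) (hxr : dist p x = infDist p (frontier C)) :
    ((∀ k : ℕ, k ∣ kC → 1 < k → k ≠ kC → dM C p x kC < dM C p x k)
        ↔ dM C p x (kC / kC.minFac) ≠ circumrad C p) ∧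
      (dM C p x kC < dM C p x (kC / kC.minFac)
        ↔ dM C p x (kC / kC.minFac) ≠ circumrad C p) := by
  obtain ⟨hcpt, hconv, hint⟩ := hC
  have hpC : p ∈ C := interior_subset hp
  have hCne : C.Nonempty := ⟨p, hpC⟩
  have hb : Bornology.IsBounded C := hcpt.isBounded
  have hxp : x ≠ p := by
    intro h
    exact hx.2 (h ▸ hp)
  -- maximizer of dist p
  obtain ⟨y, hyC, hymax'⟩ := hcpt.exists_isMaxOn hCne
    ((continuous_const.dist continuous_id).continuousOn)
  have hymax : ∀ z ∈ C, dist p z ≤ dist p y := fun z hz => hymax' hz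
  have hR : circumrad C p = dist p y := by
    apply le_antisymm
    · exact Real.iSup_le (fun z => Real.iSup_le (fun hz => hymax z hz) dist_nonneg) dist_nonneg
    · have hbd : BddAbove (Set.range fun z => ⨆ _ : z ∈ C, dist p z) := by
        refine ⟨dist p y, ?_⟩
        rintro _ ⟨z, rfl⟩
        exact Real.iSup_le (fun hz => hymax z hz) dist_nonneg
      calc dist p y = ⨆ _ : y ∈ C, dist p y := (ciSup_pos (f := fun _ => dist p y) hyC).symm
        _ ≤ ⨆ z ∈ C, dist p z := le_ciSup hbd y
  have hbdd : ∀ z ∈ C, dist p z ≤ circumrad C p := fun z hz => hR ▸ hymax z hz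
  have hR0 : 0 ≤ circumrad C p := hR ▸ dist_nonneg
  -- number theory
  have hkC0 : kC ≠ 0 := by omega
  have hχp : kC.minFac.Prime := Nat.minFac_prime (by omega)
  have hχdvd : kC.minFac ∣ kC := Nat.minFac_dvd kC
  have hmul : kC.minFac * (kC / kC.minFac) = kC := Nat.mul_div_cancel' hχdvd
  set q : ℕ := kC / kC.minFac with hqdef
  have hq_dvd : q ∣ kC := Nat.div_dvd_of_dvd hχdvd
  have hq_pos : 0 < q := Nat.div_pos (Nat.minFac_le (by omega)) hχp.pos
  have hq1 : 1 < q := by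
    rcases Nat.lt_or_ge q 2 with h | h
    · exfalso
      have hq1' : q = 1 := by omega
      rw [hq1', mul_one] at hmul
      exact hcomp (hmul ▸ hχp)
    · omega
  have hq3 : 3 ≤ q := by
    have h2 : 2 ≤ q.minFac := (Nat.minFac_prime (by omega : q ≠ 1)).two_le
    have h3 : kC.minFac ≤ q.minFac := Nat.minFac_le_of_dvd h2 ((Nat.minFac_dvd q).trans hq_dvd)
    have h4 : q.minFac ≤ q := Nat.minFac_le hq_pos
    omega
  have hqlt : q < kC := Nat.div_lt_self (by omega) (by omega)
  have hkC6 : 6 ≤ kC := by nlinarith [hmul, hmin, hq3]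
  -- symmetry for all divisors
  have hsymj : ∀ k : ℕ, k ∣ kC → k ≠ 0 → ∀ j : ℕ, rot p (j * (2 * Real.pi / k)) '' C = C := by
    intro k hdvd hk0 j
    have hit := rotsym_iterate (show rot p (2 * Real.pi / kC) '' C = C from hsym) ((kC / k) * j)
    have hcast : ((kC / k : ℕ) : ℝ) = (kC : ℝ) / (k : ℝ) :=
      Nat.cast_div hdvd (by exact_mod_cast hk0)
    have harg : (((kC / k) * j : ℕ) : ℝ) * (2 * Real.pi / kC) = j * (2 * Real.pi / k) := by
      push_cast [hcast]
      have hk0' : (k : ℝ) ≠ 0 := by exact_mod_cast hk0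
      have hkC0' : (kC : ℝ) ≠ 0 := by exact_mod_cast hkC0
      field_simp
    rw [harg] at hit
    exact hit
  -- bounds
  have hRq : circumrad C p ≤ dM C p x q :=
    circumrad_le_dM C p x hq3 hxp (hsymj q hq_dvd (by omega)) hpC hb hyC hR
  have hRkC : circumrad C p ≤ dM C p x kC :=
    circumrad_le_dM C p x (by omega) hxp (hsymj kC dvd_rfl hkC0) hpC hb hyC hR
  have hkCR : dM C p x kC ≤ circumrad C p := dM_le_circumrad C p x hkC6 hbdd hR0
  have hEq : dM C p x kC = circumrad C p := le_antisymm hkCR hRkC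
  -- monotonicity
  have hmono : ∀ k : ℕ, k ∣ kC → 1 < k → k ≠ kC → dM C p x q ≤ dM C p x k := by
    intro k hdvd hk1 hkne
    have hk3 : 3 ≤ k := le_trans hmin (Nat.minFac_le_of_dvd hk1 hdvd)
    have hkq : k ≤ q := by
      have h1 : kC / k ∣ kC := Nat.div_dvd_of_dvd hdvd
      have hself : kC / (kC / k) = k := Nat.div_div_self hdvd hkC0
      have hne : kC / k ≠ 1 := by
        intro h
        rw [h, Nat.div_one] at hself
        exact hkne hself.symm
      have hpos : 0 < kC / k := Nat.div_pos (Nat.le_of_dvd (by omega) hdvd) (by omega)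
      have h3 : kC.minFac ≤ kC / k := Nat.minFac_le_of_dvd (by omega) h1
      calc k = kC / (kC / k) := hself.symm
        _ ≤ kC / kC.minFac := Nat.div_le_div_left h3 (by omega)
    exact Metric.diam_mono
      (Set.inter_subset_inter_right C (sector_anti p x hk3 hkq))
      (hb.subset Set.inter_subset_left)
  constructor
  · constructor
    · intro hall heq
      have h := hall q hq_dvd hq1 (Nat.ne_of_lt hqlt)
      rw [hEq, heq] at h
      exact lt_irrefl _ h
    · intro hne k hdvd hk1 hkne
      calc dM C p x kC = circumrad C p := hEq
        _ < dM C p x q := lt_of_le_of_ne hRq (Ne.symm hne)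
        _ ≤ dM C p x k := hmono k hdvd hk1 hkne
  · constructor
    · intro h heq
      rw [hEq, heq] at h
      exact lt_irrefl _ h
    · intro hne
      rw [hEq]
      exact lt_of_le_of_ne hRq (Ne.symm hne)
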